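/- For all real numbers a, b, c, d, e, g, h, k, the 6×6 real antisymmetric matrix with rows (0, a, b, 0, −b, −a), (−a, 0, c, d, e, g), (−b, −c, 0, h, k, e), (0, −d, −h, 0, h, d), (b, −e, −k, −h, 0, c), (a, −g, −e, −d, −c, 0) has determinant zero; consequently its kernel has dimension at least 2. -/

import Mathlib

open Matrix

private lemma cons_val_five {α : Type*} {m : ℕ} (x : α) (u : Fin (m + 5) → α) :
    vecCons x u 5 = vecHead (vecTail (vecTail (vecTail (vecTail u)))) := rfl

/-- For all reals `a, b, c, d, e, g, h, k`, the `6×6` real antisymmetric matrix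
with rows `(0, a, b, 0, −b, −a)`, `(−a, 0, c, d, e, g)`, `(−b, −c, 0, h, k, e)`,
`(0, −d, −h, 0, h, d)`, `(b, −e, −k, −h, 0, c)`, `(a, −g, −e, −d, −c, 0)`
(the mass coefficient matrix of a type-1 symmetric 1+6 coorbital configuration)
has determinant zero; consequently its kernel has dimension at least `2`. -/
theorem type1_symmetric_one_plus_six_det_zero (a b c d e g h k : ℝ)
    (F : Matrix (Fin 6) (Fin 6) ℝ)
    (hF : F = !![0, a, b, 0, -b, -a;
                 -a, 0, c, d, e, g;
                 -b, -c, 0, h, k, e;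
                 0, -d, -h, 0, h, d;
                 b, -e, -k, -h, 0, c;
                 a, -g, -e, -d, -c, 0]) :
    F.det = 0 ∧ 2 ≤ Module.finrank ℝ (LinearMap.ker F.mulVecLin) := by
  classical
  -- The column space is contained in the span of 4 vectors: columns 1 and 2,
  -- together with the two fixed "symmetric pattern" vectors w₁, w₂.
  set v : Fin 4 → (Fin 6 → ℝ) :=
    ![![a, 0, -c, -d, -e, -g], ![b, c, 0, -h, -k, -e],
      ![0, 1, 0, 0, 0, -1], ![0, 0, 1, 0, -1, 0]] with hv
  set S : Submodule ℝ (Fin 6 → ℝ) := Submodule.span ℝ (Set.range v) with hS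
  have hmem : ∀ i : Fin 4, v i ∈ S := fun i =>
    Submodule.subset_span (Set.mem_range_self i)
  have hrange : LinearMap.range F.mulVecLin ≤ S := by
    rw [Matrix.range_mulVecLin, Submodule.span_le]
    rintro x ⟨i, rfl⟩
    have h0 := hmem 0
    have h1 := hmem 1
    have h2 := hmem 2
    have h3 := hmem 3
    fin_cases i
    · show Fᵀ 0 ∈ S
      have : Fᵀ 0 = (-a) • v 2 + (-b) • v 3 := by
        subst hF; funext j; fin_cases j <;> simp [hv, cons_val_five]
      rw [this]; exact S.add_mem (S.smul_mem _ h2) (S.smul_mem _ h3)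
    · show Fᵀ 1 ∈ S
      have : Fᵀ 1 = v 0 := by
        subst hF; funext j; fin_cases j <;> simp [hv, cons_val_five]
      rw [this]; exact h0
    · show Fᵀ 2 ∈ S
      have : Fᵀ 2 = v 1 := by
        subst hF; funext j; fin_cases j <;> simp [hv, cons_val_five]
      rw [this]; exact h1
    · show Fᵀ 3 ∈ S
      have : Fᵀ 3 = d • v 2 + h • v 3 := by
        subst hF; funext j; fin_cases j <;> simp [hv, cons_val_five]
      rw [this]; exact S.add_mem (S.smul_mem _ h2) (S.smul_mem _ h3)
    · show Fᵀ 4 ∈ S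
      have : Fᵀ 4 = (-1 : ℝ) • v 1 + ((c + e) • v 2 + k • v 3) := by
        subst hF; funext j; fin_cases j <;> simp [hv, cons_val_five]
      rw [this]
      exact S.add_mem (S.smul_mem _ h1) (S.add_mem (S.smul_mem _ h2) (S.smul_mem _ h3))
    · show Fᵀ 5 ∈ S
      have : Fᵀ 5 = (-1 : ℝ) • v 0 + (g • v 2 + (e - c) • v 3) := by
        subst hF; funext j; fin_cases j <;> simp [hv, cons_val_five]
      rw [this]
      exact S.add_mem (S.smul_mem _ h0) (S.add_mem (S.smul_mem _ h2) (S.smul_mem _ h3))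
  -- Hence the rank is at most 4, so by rank-nullity the kernel has dimension ≥ 2.
  have hrank : Module.finrank ℝ (LinearMap.range F.mulVecLin) ≤ 4 := by
    refine le_trans (Submodule.finrank_mono hrange) ?_
    exact (finrank_range_le_card v).trans_eq (by simp)
  have hsum := LinearMap.finrank_range_add_finrank_ker F.mulVecLin
  rw [Module.finrank_fintype_fun_eq_card, Fintype.card_fin] at hsum
  have hker : 2 ≤ Module.finrank ℝ (LinearMap.ker F.mulVecLin) := by omega
  refine ⟨?_, hker⟩
  -- A nontrivial kernel forces the determinant to vanish.
  have hne : LinearMap.ker F.mulVecLin ≠ ⊥ := by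
    intro hbot
    rw [hbot, finrank_bot] at hker
    omega
  obtain ⟨x, hx, hx0⟩ := Submodule.exists_mem_ne_zero_of_ne_bot hne
  exact Matrix.exists_mulVec_eq_zero_iff.mp ⟨x, hx0, hx⟩
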